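/- Let X ≥ 2 and let M be an R×C matrix with integer entries in {0,…,X}, and let G_M be its weighted grid embedding. Then for every 1 ≤ k ≤ R and 1 ≤ j ≤ C, the shortest-path distance between a_j and b_k in G_M equals X²·(2R·(C−j+1) + 2jk − 1) + M_{k,j}. -/

import Mathlib

/-- Vertices of the grid embedding: `a j` (top terminals), `b i` (right terminals),
`u i j` (grid intersections), `v i j` (subdivision vertex above `u i j`),
`w i j` (subdivision vertex to the right of `u i j`), `x i j` (shortcut vertices).
Indices are 1-based natural numbers; out-of-range vertices are isolated. -/
inductive GV : Type
  | a (j : ℕ)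
  | b (i : ℕ)
  | u (i j : ℕ)
  | v (i j : ℕ)
  | w (i j : ℕ)
  | x (i j : ℕ)
deriving DecidableEq

/-- One-directional edge weights of the grid embedding of a boolean `R × C` matrix `M`;
`⊤` means "no edge". -/
def dirW (R C : ℕ) (M : ℕ → ℕ → Bool) : GV → GV → ℕ∞
  | GV.a j, GV.v i' j' =>
      if i' = 1 ∧ j' = j ∧ 1 ≤ j ∧ j ≤ C then ((2 * j - 1 : ℕ) : ℕ∞) else ⊤
  | GV.v i j, GV.u i' j' =>
      if i' = i ∧ j' = j ∧ 1 ≤ i ∧ i ≤ R ∧ 1 ≤ j ∧ j ≤ C then 1 else ⊤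
  | GV.u i j, GV.v i' j' =>
      if i' = i + 1 ∧ j' = j ∧ 1 ≤ i ∧ i + 1 ≤ R ∧ 1 ≤ j ∧ j ≤ C then
        ((2 * j - 1 : ℕ) : ℕ∞) else ⊤
  | GV.u i j, GV.w i' j' =>
      if i' = i ∧ j' = j ∧ 1 ≤ i ∧ i ≤ R ∧ 1 ≤ j ∧ j ≤ C then 2 else ⊤
  | GV.w i j, GV.u i' j' =>
      if i' = i ∧ j' = j + 1 ∧ 1 ≤ i ∧ i ≤ R ∧ 1 ≤ j ∧ j + 1 ≤ C then
        ((2 * R - 2 : ℕ) : ℕ∞) else ⊤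
  | GV.w i j, GV.b i' =>
      if i' = i ∧ j = C ∧ 1 ≤ i ∧ i ≤ R ∧ 1 ≤ C then ((2 * R - 2 : ℕ) : ℕ∞) else ⊤
  | GV.v i j, GV.x i' j' =>
      if i' = i ∧ j' = j ∧ M i j = true ∧ 1 ≤ i ∧ i ≤ R ∧ 1 ≤ j ∧ j ≤ C then 1 else ⊤
  | GV.x i j, GV.w i' j' =>
      if i' = i ∧ j' = j ∧ M i j = true ∧ 1 ≤ i ∧ i ≤ R ∧ 1 ≤ j ∧ j ≤ C then 1 else ⊤
  | _, _ => ⊤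

/-- Symmetrization of a one-directional weight function. -/
noncomputable def symW {V : Type} (f : V → V → ℕ∞) : V → V → ℕ∞ := fun p q => min (f p q) (f q p)

/-- Edge weights of the grid embedding of a boolean matrix `M`. -/
noncomputable def gridW (R C : ℕ) (M : ℕ → ℕ → Bool) : GV → GV → ℕ∞ := symW (dirW R C M)

/-- One-directional edge weights of the weighted grid embedding of an `R × C` matrix `M`
with entries in `{0, …, X}`: the grid embedding of the all-ones boolean matrix with every
weight multiplied by `X²`, and the weight of each edge `(v i j, x i j)` increased by `M i j`. -/
def dirWt (R C X : ℕ) (M : ℕ → ℕ → ℕ) : GV → GV → ℕ∞ := fun p q =>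
  (X : ℕ∞) ^ 2 * dirW R C (fun _ _ => true) p q +
    (match p, q with
      | GV.v i j, GV.x i' j' => if i' = i ∧ j' = j then (M i j : ℕ∞) else 0
      | _, _ => 0)

/-- Edge weights of the weighted grid embedding of `M`. -/
noncomputable def wgridW (R C X : ℕ) (M : ℕ → ℕ → ℕ) : GV → GV → ℕ∞ := symW (dirWt R C X M)

/-- Edge weights of the mirrored grid `G'`: the (weighted, scaled by `X²`) grid embedding
with all shortcut vertices removed.  Mirroring is a weight-preserving graph isomorphism, so
the mirrored copy is represented by the same abstract graph. -/
noncomputable def mirW (R C X : ℕ) : GV → GV → ℕ∞ :=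
  fun p q => (X : ℕ∞) ^ 2 * gridW R C (fun _ _ => false) p q

/-- Total weight of a walk, given as its list of visited vertices. -/
def cost {V : Type} (W : V → V → ℕ∞) : List V → ℕ∞
  | p :: q :: l => W p q + cost W (q :: l)
  | _ => 0

/-- Shortest-path distance: the least total weight of a walk from `s` to `t`
(`⊤` if there is none; walks through a non-edge have cost `⊤`). -/
noncomputable def gdist {V : Type} (W : V → V → ℕ∞) (s t : V) : ℕ∞ :=
  sInf {c | ∃ l : List V, l.head? = some s ∧ l.getLast? = some t ∧ cost W l = c}


-- generic lower bound via potential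
theorem cost_lb {V : Type} (W : V → V → ℕ∞) (φ : V → ℕ∞)
    (h : ∀ p q, φ q ≤ φ p + W p q) :
    ∀ (l : List V) (s t : V), l.head? = some s → l.getLast? = some t →
      φ t ≤ φ s + cost W l
  | [], s, t => by simp
  | [p], s, t => by
      intro h1 h2
      simp only [List.head?_cons, Option.some.injEq] at h1
      simp only [List.getLast?_singleton, Option.some.injEq] at h2
      subst h1; subst h2; simp [cost]
  | p :: q :: l, s, t => by
      intro h1 h2
      simp only [List.head?_cons, Option.some.injEq] at h1
      subst h1
      rw [List.getLast?_cons_cons] at h2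
      have ih := cost_lb W φ h (q :: l) q t rfl h2
      calc φ t ≤ φ q + cost W (q :: l) := ih
        _ ≤ (φ p + W p q) + cost W (q :: l) := by gcongr; exact h p q
        _ = φ p + cost W (p :: q :: l) := by rw [cost]; ring

theorem gdist_le {V : Type} (W : V → V → ℕ∞) (s t : V) (l : List V)
    (h1 : l.head? = some s) (h2 : l.getLast? = some t) :
    gdist W s t ≤ cost W l := sInf_le ⟨l, h1, h2, rfl⟩

theorem le_gdist {V : Type} (W : V → V → ℕ∞) (s t : V) (c : ℕ∞)
    (h : ∀ l : List V, l.head? = some s → l.getLast? = some t → c ≤ cost W l) :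
    c ≤ gdist W s t := le_sInf (by rintro d ⟨l, h1, h2, rfl⟩; exact h l h1 h2)


def phiU (R X j k m i c : ℕ) : ℕ :=
  if c ≤ j then X^2 * (2*j + 2*R*(j-c) + 2*c*(i-1))
  else X^2 * (2*j*i + 2*R*(c-j) - 1) + (if i = k then m else 0)

def phiV (R X j k m i c : ℕ) : ℕ :=
  if c ≤ j then phiU R X j k m i c - X^2
  else X^2 * (2*j*i + 2*R*(c-j))

def phiW (R X j k m i c : ℕ) : ℕ :=
  if c < j then min (phiU R X j k m i c + X^2) (phiU R X j k m i (c+1) + (2*R-2) * X^2)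
  else X^2 * (2*j*i + 2*R*(c-j) + 1) + (if i = k then m else 0)

def phiX (R X j k m i c : ℕ) : ℕ :=
  if c < j then min (phiV R X j k m i c) (phiW R X j k m i c) + X^2
  else if c = j then X^2 * (2*j*i) + (if i = k then m else 0)
  else X^2 * (2*j*i + 2*R*(c-j) + 1)

def phi (R C X j k m : ℕ) : GV → ℕ
  | GV.a c => if c = j then 0 else phiV R X j k m 1 c + (2*c-1) * X^2
  | GV.b i => phiW R X j k m i C + (2*R-2) * X^2
  | GV.u i c => phiU R X j k m i c
  | GV.v i c => phiV R X j k m i c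
  | GV.w i c => phiW R X j k m i c
  | GV.x i c => phiX R X j k m i c

lemma mul_sub_bridge (s a b : ℕ) (h : b ≤ a) : s * a = s * (a - b) + s * b := by
  rw [← Nat.mul_add, Nat.sub_add_cancel h]

section edges
variable {R C X j k m i c : ℕ}

-- edge a c -- v 1 c, weight X^2*(2*c-1)
lemma nAV (hj1 : 1 ≤ j) (hm : m ≤ X^2) (hc1 : 1 ≤ c) :
    phiV R X j k m 1 c ≤ (if c = j then 0 else phiV R X j k m 1 c + (2*c-1) * X^2)
      + X^2 * (2*c-1) ∧
    (if c = j then 0 else phiV R X j k m 1 c + (2*c-1) * X^2)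
      ≤ phiV R X j k m 1 c + X^2 * (2*c-1) := by
  by_cases hc : c = j
  · subst hc
    simp only [if_pos rfl, phiV, phiU, le_refl, if_pos, Nat.sub_self, Nat.le_refl,
      Nat.mul_zero, Nat.add_zero]
    have h1 : X^2 * (2*c) = X^2 * (2*c-1) + X^2*1 := mul_sub_bridge _ _ _ (by omega)
    omega
  · rw [if_neg hc]
    have : (2*c-1) * X^2 = X^2 * (2*c-1) := Nat.mul_comm _ _
    omega

-- edge u i c -- v (i+1) c, weight X^2*(2*c-1)
lemma nUV (hj1 : 1 ≤ j) (hm : m ≤ X^2) (hi1 : 1 ≤ i) (hc1 : 1 ≤ c) (hcj : c ≤ j ∨ j + 1 ≤ c) :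
    phiV R X j k m (i+1) c ≤ phiU R X j k m i c + X^2 * (2*c-1) ∧
    phiU R X j k m i c ≤ phiV R X j k m (i+1) c + X^2 * (2*c-1) := by
  obtain ⟨i0, rfl⟩ : ∃ i0, i = i0 + 1 := ⟨i-1, by omega⟩
  by_cases hc : c ≤ j
  · simp only [phiV, phiU, if_pos hc, Nat.add_sub_cancel]
    -- U(i+1) = U(i) + 2c*s ; V(i+1) = U(i+1) - s
    have h1 : X^2 * (2*j + 2*R*(j-c) + 2*c*(i0+1)) =
        X^2 * (2*j + 2*R*(j-c) + 2*c*i0) + X^2 * (2*c) := by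
      rw [← Nat.mul_add]; ring_nf
    have h2 : X^2 * (2*c) = X^2 * (2*c-1) + X^2*1 := mul_sub_bridge _ _ _ (by omega)
    have h3 : X^2*1 ≤ X^2 * (2*j + 2*R*(j-c) + 2*c*i0) :=
      Nat.mul_le_mul_left _ (by nlinarith)
    omega
  · have hc' : j + 1 ≤ c := by omega
    simp only [phiV, phiU, if_neg hc]
    -- V(i+1) = s*(2j(i+1) + 2R(c-j)); U(i) = s*(2j i + 2R(c-j) - 1) + δ m
    have h1 : X^2 * (2*j*(i0+1+1) + 2*R*(c-j)) =
        X^2 * (2*j*(i0+1) + 2*R*(c-j)) + X^2*(2*j) := by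
      rw [← Nat.mul_add]; ring_nf
    have h2 : X^2 * (2*j*(i0+1) + 2*R*(c-j)) =
        X^2 * (2*j*(i0+1) + 2*R*(c-j) - 1) + X^2*1 :=
      mul_sub_bridge _ _ _ (by nlinarith)
    have h3 : X^2*(2*j) + X^2*1 ≤ X^2*(2*c-1) := by
      rw [← Nat.mul_add]; exact Nat.mul_le_mul_left _ (by omega)
    have h4 : (if i0+1 = k then m else 0) ≤ X^2 := by split <;> omega
    omega

end edges

section edges2
variable {R C X j k m i c : ℕ}

lemma Hleft (R X : ℕ) {j : ℕ} (m i c : ℕ) (hi1 : 1 ≤ i) (hcj : c < j) :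
    X^2*(2*j+2*R*(j-(c+1))+2*(c+1)*(i-1)) + X^2*(2*R)
      = X^2*(2*j+2*R*(j-c)+2*c*(i-1)) + X^2*(2*(i-1)) := by
  rw [← Nat.mul_add, ← Nat.mul_add]
  congr 1
  obtain ⟨d, rfl⟩ : ∃ d, j = c + 1 + d := ⟨j - (c+1), by omega⟩
  obtain ⟨i0, rfl⟩ : ∃ i0, i = i0 + 1 := ⟨i - 1, by omega⟩
  simp only [show c+1+d-(c+1) = d from by omega, show c+1+d-c = d+1 from by omega,
    Nat.add_sub_cancel]
  ring

-- edge u i c -- w i c, weight X^2*2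
lemma nUW (hj1 : 1 ≤ j) (hm : m ≤ X^2) (hi1 : 1 ≤ i) (hiR : i ≤ R) (hc1 : 1 ≤ c) :
    phiW R X j k m i c ≤ phiU R X j k m i c + X^2 * 2 ∧
    phiU R X j k m i c ≤ phiW R X j k m i c + X^2 * 2 := by
  rcases lt_trichotomy c j with hc | hc | hc
  · simp only [phiW, phiU, if_pos hc, if_pos hc.le, if_pos (show c+1 ≤ j by omega)]
    have H := Hleft R X m i c hi1 hc
    have hb : X^2*(2*R) = X^2*(2*R-2) + X^2*2 := mul_sub_bridge _ _ _ (by omega)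
    have hcm : (2*R-2) * X^2 = X^2 * (2*R-2) := Nat.mul_comm _ _
    omega
  · subst hc
    obtain ⟨i0, rfl⟩ : ∃ i0, i = i0 + 1 := ⟨i - 1, by omega⟩
    simp only [phiW, phiU, if_pos (le_refl c), if_neg (lt_irrefl c), Nat.sub_self,
      Nat.mul_zero, Nat.add_zero, Nat.add_sub_cancel]
    have e1 : X^2*(2*c + 2*c*i0) = X^2*(2*c*(i0+1)) := by congr 1; ring
    have e2 : X^2*(2*c*(i0+1) + 1) = X^2*(2*c*(i0+1)) + X^2*1 := by
      rw [← Nat.mul_add]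
    have h4 : (if i0+1 = k then m else 0) ≤ X^2 := by split <;> omega
    omega
  · simp only [phiW, phiU, if_neg (show ¬ c < j by omega), if_neg (show ¬ c ≤ j by omega)]
    have hA : 1 ≤ 2*j*i + 2*R*(c-j) := by nlinarith
    have e1 : X^2*(2*j*i + 2*R*(c-j) + 1) = X^2*(2*j*i + 2*R*(c-j) - 1) + X^2*2 := by
      rw [← Nat.mul_add]
      congr 1
      omega
    have h4 : (if i = k then m else 0) ≤ X^2 := by split <;> omega
    omega

-- edge w i c -- u i (c+1), weight X^2*(2*R-2)
lemma nWU (hj1 : 1 ≤ j) (hm : m ≤ X^2) (hi1 : 1 ≤ i) (hiR : i ≤ R) (hc1 : 1 ≤ c) :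
    phiU R X j k m i (c+1) ≤ phiW R X j k m i c + X^2 * (2*R-2) ∧
    phiW R X j k m i c ≤ phiU R X j k m i (c+1) + X^2 * (2*R-2) := by
  rcases lt_trichotomy c j with hc | hc | hc
  · simp only [phiW, phiU, if_pos hc, if_pos hc.le, if_pos (show c+1 ≤ j by omega)]
    have H := Hleft R X m i c hi1 hc
    have hb : X^2*(2*R) = X^2*(2*R-2) + X^2*2 := mul_sub_bridge _ _ _ (by omega)
    have hcm : (2*R-2) * X^2 = X^2 * (2*R-2) := Nat.mul_comm _ _
    have hle : X^2*(2*(i-1)) ≤ X^2*(2*R) := Nat.mul_le_mul_left _ (by omega)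
    omega
  · subst hc
    simp only [phiW, phiU, if_neg (lt_irrefl c), if_neg (show ¬ c + 1 ≤ c by omega),
      Nat.sub_self, Nat.mul_zero, Nat.add_zero]
    have e1 : X^2*(2*c*i + 2*R*(c+1-c) - 1) = X^2*(2*c*i + 1) + X^2*(2*R-2) := by
      rw [← Nat.mul_add]
      congr 1
      have : c+1-c = 1 := by omega
      rw [this]
      have h1 : 1 ≤ 2*c*i := by nlinarith
      omega
    omega
  · simp only [phiW, phiU, if_neg (show ¬ c < j by omega), if_neg (show ¬ c ≤ j by omega),
      if_neg (show ¬ c + 1 ≤ j by omega)]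
    have hA : 1 ≤ 2*j*i + 2*R*(c-j) := by nlinarith
    have e1 : X^2*(2*j*i + 2*R*(c+1-j) - 1) = X^2*(2*j*i + 2*R*(c-j) + 1) + X^2*(2*R-2) := by
      rw [← Nat.mul_add]
      congr 1
      have h2 : c+1-j = (c-j)+1 := by omega
      rw [h2, Nat.mul_add, Nat.mul_one]
      omega
    omega

-- edge w i C -- b i, weight X^2*(2*R-2); phi(b i) = phiW i C + (2*R-2)*X^2
lemma nWB :
    phiW R X j k m i C + (2*R-2) * X^2 ≤ phiW R X j k m i C + X^2 * (2*R-2) ∧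
    phiW R X j k m i C ≤ (phiW R X j k m i C + (2*R-2) * X^2) + X^2 * (2*R-2) := by
  have hcm : (2*R-2) * X^2 = X^2 * (2*R-2) := Nat.mul_comm _ _
  omega

end edges2

section edges3
variable {R C X j k m i c : ℕ} {M : ℕ → ℕ → ℕ}

-- edge v i c -- x i c, weight X^2*1 + M i c
lemma nVX (hj1 : 1 ≤ j) (hm : m ≤ X^2) (hmM : m ≤ M k j)
    (hi1 : 1 ≤ i) (hiR : i ≤ R) (hc1 : 1 ≤ c) :
    phiX R X j k m i c ≤ phiV R X j k m i c + (X^2 * 1 + M i c) ∧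
    phiV R X j k m i c ≤ phiX R X j k m i c + (X^2 * 1 + M i c) := by
  rcases lt_trichotomy c j with hc | hc | hc
  · simp only [phiX, phiV, phiW, phiU, if_pos hc, if_pos hc.le,
      if_pos (show c+1 ≤ j by omega)]
    have H := Hleft R X m i c hi1 hc
    have hb : X^2*(2*R) = X^2*(2*R-2) + X^2*2 := mul_sub_bridge _ _ _ (by omega)
    have hcm : (2*R-2) * X^2 = X^2 * (2*R-2) := Nat.mul_comm _ _
    have h3 : X^2*1 ≤ X^2*(2*j + 2*R*(j-c) + 2*c*(i-1)) :=
      Nat.mul_le_mul_left _ (by nlinarith)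
    omega
  · subst hc
    obtain ⟨i0, rfl⟩ : ∃ i0, i = i0 + 1 := ⟨i - 1, by omega⟩
    simp only [phiX, phiV, phiU, if_neg (lt_irrefl c), eq_self_iff_true, if_true,
      le_refl, Nat.sub_self, Nat.mul_zero, Nat.add_zero, Nat.add_sub_cancel]
    have e1 : X^2*(2*c + 2*c*i0) = X^2*(2*c*(i0+1)) := by congr 1; ring
    have h3 : X^2*1 ≤ X^2*(2*c*(i0+1)) := Nat.mul_le_mul_left _ (by nlinarith)
    have hδ : (if i0+1 = k then m else 0) ≤ M (i0+1) c := by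
      split
      · next h => rw [h]; exact hmM
      · omega
    omega
  · simp only [phiX, phiV, if_neg (show ¬ c < j by omega), if_neg (show ¬ c ≤ j by omega),
      if_neg (show ¬ c = j by omega)]
    have e1 : X^2*(2*j*i + 2*R*(c-j) + 1) = X^2*(2*j*i + 2*R*(c-j)) + X^2*1 := by
      rw [← Nat.mul_add]
    omega

-- edge x i c -- w i c, weight X^2*1
lemma nXW (hj1 : 1 ≤ j) (hm : m ≤ X^2) (hi1 : 1 ≤ i) (hiR : i ≤ R) (hc1 : 1 ≤ c) :
    phiW R X j k m i c ≤ phiX R X j k m i c + X^2 * 1 ∧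
    phiX R X j k m i c ≤ phiW R X j k m i c + X^2 * 1 := by
  rcases lt_trichotomy c j with hc | hc | hc
  · simp only [phiX, phiV, phiW, phiU, if_pos hc, if_pos hc.le,
      if_pos (show c+1 ≤ j by omega)]
    have h3 : X^2*1 ≤ X^2*(2*j + 2*R*(j-c) + 2*c*(i-1)) :=
      Nat.mul_le_mul_left _ (by nlinarith)
    omega
  · subst hc
    obtain ⟨i0, rfl⟩ : ∃ i0, i = i0 + 1 := ⟨i - 1, by omega⟩
    simp only [phiX, phiW, if_neg (lt_irrefl c), eq_self_iff_true, if_true,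
      Nat.sub_self, Nat.mul_zero, Nat.add_zero]
    have e2 : X^2*(2*c*(i0+1) + 1) = X^2*(2*c*(i0+1)) + X^2*1 := by rw [← Nat.mul_add]
    omega
  · simp only [phiX, phiW, if_neg (show ¬ c < j by omega), if_neg (show ¬ c = j by omega)]
    have h4 : (if i = k then m else 0) ≤ X^2 := by split <;> omega
    omega

end edges3

section edgesVU
variable {R C X j k m i c : ℕ}
lemma nVU (hj1 : 1 ≤ j) (hm : m ≤ X^2) (hi1 : 1 ≤ i) :
    phiU R X j k m i c ≤ phiV R X j k m i c + X^2 * 1 ∧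
    phiV R X j k m i c ≤ phiU R X j k m i c + X^2 * 1 := by
  by_cases hc : c ≤ j
  · simp only [phiU, phiV, if_pos hc]
    have h1 : X^2*1 ≤ X^2*(2*j + 2*R*(j-c) + 2*c*(i-1)) :=
      Nat.mul_le_mul_left _ (by nlinarith)
    omega
  · simp only [phiU, phiV, if_neg hc]
    have h1 : X^2*(2*j*i + 2*R*(c-j) - 1) + X^2*1 = X^2*(2*j*i + 2*R*(c-j)) := by
      rw [← Nat.mul_add]
      congr 1
      have : 1 ≤ 2*j*i := by nlinarith
      omega
    have : (if i = k then m else 0) ≤ X^2 := by split <;> omega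
    omega
end edgesVU


section feas

lemma htop (X : ℕ) (hX : 2 ≤ X) (a b : ℕ) (e : ℕ∞) :
    (a : ℕ∞) ≤ (b:ℕ∞) + ((X:ℕ∞)^2 * ⊤ + e) := by
  rw [ENat.mul_top (by positivity), top_add, add_top]
  exact le_top

set_option maxHeartbeats 2000000 in
lemma feas (R C X j k m : ℕ) (M : ℕ → ℕ → ℕ) (hX : 2 ≤ X) (hm : m ≤ X^2)
    (hmM : m ≤ M k j) (hj1 : 1 ≤ j) :
    ∀ p q, (phi R C X j k m q : ℕ∞) ≤ phi R C X j k m p + dirWt R C X M p q ∧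
           (phi R C X j k m p : ℕ∞) ≤ phi R C X j k m q + dirWt R C X M p q := by
  intro p q
  cases p <;> cases q <;>
    simp only [dirWt, dirW, phi] <;>
    try exact ⟨htop X hX _ _ _, htop X hX _ _ _⟩
  case a.v c i' c' =>
    by_cases hw : i' = 1 ∧ c' = c ∧ 1 ≤ c ∧ c ≤ C
    · rw [if_pos hw]
      obtain ⟨rfl, rfl, hc1, hcC⟩ := hw
      exact ⟨by exact_mod_cast (nAV (R:=R) (k:=k) (m:=m) hj1 hm hc1).1,
             by exact_mod_cast (nAV (R:=R) (k:=k) (m:=m) hj1 hm hc1).2⟩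
    · rw [if_neg hw]; exact ⟨htop X hX _ _ _, htop X hX _ _ _⟩
  case v.u i c i' c' =>
    by_cases hw : i' = i ∧ c' = c ∧ 1 ≤ i ∧ i ≤ R ∧ 1 ≤ c ∧ c ≤ C
    · rw [if_pos hw]
      obtain ⟨rfl, rfl, hi1, hiR, hc1, hcC⟩ := hw
      exact ⟨by exact_mod_cast (nVU (R:=R) (k:=k) (m:=m) hj1 hm hi1).1,
             by exact_mod_cast (nVU (R:=R) (k:=k) (m:=m) hj1 hm hi1).2⟩
    · rw [if_neg hw]; exact ⟨htop X hX _ _ _, htop X hX _ _ _⟩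
  case u.v i c i' c' =>
    by_cases hw : i' = i + 1 ∧ c' = c ∧ 1 ≤ i ∧ i + 1 ≤ R ∧ 1 ≤ c ∧ c ≤ C
    · rw [if_pos hw]
      obtain ⟨rfl, rfl, hi1, hiR, hc1, hcC⟩ := hw
      exact ⟨by exact_mod_cast (nUV (R:=R) (k:=k) (m:=m) hj1 hm hi1 hc1 (by omega)).1,
             by exact_mod_cast (nUV (R:=R) (k:=k) (m:=m) hj1 hm hi1 hc1 (by omega)).2⟩
    · rw [if_neg hw]; exact ⟨htop X hX _ _ _, htop X hX _ _ _⟩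
  case u.w i c i' c' =>
    by_cases hw : i' = i ∧ c' = c ∧ 1 ≤ i ∧ i ≤ R ∧ 1 ≤ c ∧ c ≤ C
    · rw [if_pos hw]
      obtain ⟨rfl, rfl, hi1, hiR, hc1, hcC⟩ := hw
      exact ⟨by exact_mod_cast (nUW (k:=k) (m:=m) hj1 hm hi1 hiR hc1).1,
             by exact_mod_cast (nUW (k:=k) (m:=m) hj1 hm hi1 hiR hc1).2⟩
    · rw [if_neg hw]; exact ⟨htop X hX _ _ _, htop X hX _ _ _⟩
  case w.u i c i' c' =>
    by_cases hw : i' = i ∧ c' = c + 1 ∧ 1 ≤ i ∧ i ≤ R ∧ 1 ≤ c ∧ c + 1 ≤ C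
    · rw [if_pos hw]
      obtain ⟨rfl, rfl, hi1, hiR, hc1, hcC⟩ := hw
      exact ⟨by exact_mod_cast (nWU (k:=k) (m:=m) hj1 hm hi1 hiR hc1).1,
             by exact_mod_cast (nWU (k:=k) (m:=m) hj1 hm hi1 hiR hc1).2⟩
    · rw [if_neg hw]; exact ⟨htop X hX _ _ _, htop X hX _ _ _⟩
  case w.b i c i' =>
    by_cases hw : i' = i ∧ c = C ∧ 1 ≤ i ∧ i ≤ R ∧ 1 ≤ C
    · rw [if_pos hw]
      obtain ⟨rfl, rfl, hi1, hiR, hC1⟩ := hw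
      exact ⟨by exact_mod_cast (nWB (R:=R) (X:=X) (j:=j) (k:=k) (m:=m) (i:=i') (C:=c)).1,
             by exact_mod_cast (nWB (R:=R) (X:=X) (j:=j) (k:=k) (m:=m) (i:=i') (C:=c)).2⟩
    · rw [if_neg hw]; exact ⟨htop X hX _ _ _, htop X hX _ _ _⟩
  case v.x i c i' c' =>
    by_cases hw : i' = i ∧ c' = c ∧ True ∧ 1 ≤ i ∧ i ≤ R ∧ 1 ≤ c ∧ c ≤ C
    · rw [if_pos hw, if_pos (show i' = i ∧ c' = c from ⟨hw.1, hw.2.1⟩)]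
      obtain ⟨rfl, rfl, -, hi1, hiR, hc1, hcC⟩ := hw
      exact ⟨by exact_mod_cast (nVX hj1 hm hmM hi1 hiR hc1).1,
             by exact_mod_cast (nVX hj1 hm hmM hi1 hiR hc1).2⟩
    · rw [if_neg hw]; exact ⟨htop X hX _ _ _, htop X hX _ _ _⟩
  case x.w i c i' c' =>
    by_cases hw : i' = i ∧ c' = c ∧ True ∧ 1 ≤ i ∧ i ≤ R ∧ 1 ≤ c ∧ c ≤ C
    · rw [if_pos hw]
      obtain ⟨rfl, rfl, -, hi1, hiR, hc1, hcC⟩ := hw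
      exact ⟨by exact_mod_cast (nXW (k:=k) (m:=m) hj1 hm hi1 hiR hc1).1,
             by exact_mod_cast (nXW (k:=k) (m:=m) hj1 hm hi1 hiR hc1).2⟩
    · rw [if_neg hw]; exact ⟨htop X hX _ _ _, htop X hX _ _ _⟩

end feas


section upper

def htail (k C : ℕ) : ℕ → List GV
  | 0 => [GV.b k]
  | d+1 => GV.u k (C-d) :: GV.w k (C-d) :: htail k C d

def vtail (k j C : ℕ) : ℕ → List GV
  | 0 => GV.v k j :: GV.x k j :: GV.w k j :: htail k C (C-j)
  | t+1 => GV.v (k-(t+1)) j :: GV.u (k-(t+1)) j :: vtail k j C t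

variable {R C X j k : ℕ} {M : ℕ → ℕ → ℕ}

lemma dwt_top (M : ℕ → ℕ → ℕ) (hX : 2 ≤ X) {p q : GV}
    (h : dirW R C (fun _ _ => true) p q = ⊤) : dirWt R C X M p q = ⊤ := by
  have : ((X:ℕ∞))^2 ≠ 0 := by positivity
  simp only [dirWt, h, ENat.mul_top this, top_add]

lemma wg_min_top {p q : GV} (h : dirWt R C X M q p = ⊤) :
    wgridW R C X M p q = dirWt R C X M p q := by
  simp only [wgridW, symW, h]
  exact min_eq_left le_top

-- edge a j -- v 1 j
lemma ev_av (hX : 2 ≤ X) (hj1 : 1 ≤ j) (hjC : j ≤ C) :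
    wgridW R C X M (GV.a j) (GV.v 1 j) = ((X^2*(2*j-1) : ℕ) : ℕ∞) := by
  rw [wg_min_top (dwt_top M hX (by simp [dirW]))]
  simp only [dirWt, dirW, eq_self_iff_true, true_and, if_true]
  rw [if_pos (⟨hj1, hjC⟩ : 1 ≤ j ∧ j ≤ C), add_zero, ← Nat.cast_pow, ← Nat.cast_mul]

-- edge v i c -- u i c
lemma ev_vu (hX : 2 ≤ X) {i c : ℕ} (hi1 : 1 ≤ i) (hiR : i ≤ R) (hc1 : 1 ≤ c) (hcC : c ≤ C) :
    wgridW R C X M (GV.v i c) (GV.u i c) = ((X^2 : ℕ) : ℕ∞) := by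
  rw [wg_min_top (dwt_top M hX (by simp [dirW]))]
  simp only [dirWt, dirW, eq_self_iff_true, true_and, if_true]
  rw [if_pos (⟨hi1, hiR, hc1, hcC⟩ : _ ∧ _ ∧ _ ∧ _), add_zero, mul_one, ← Nat.cast_pow]

-- edge u i c -- v (i+1) c
lemma ev_uv (hX : 2 ≤ X) {i c : ℕ} (hi1 : 1 ≤ i) (hiR : i + 1 ≤ R) (hc1 : 1 ≤ c) (hcC : c ≤ C) :
    wgridW R C X M (GV.u i c) (GV.v (i+1) c) = ((X^2*(2*c-1) : ℕ) : ℕ∞) := by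
  rw [wg_min_top (dwt_top M hX (by simp [dirW]))]
  simp only [dirWt, dirW, eq_self_iff_true, true_and, if_true]
  rw [if_pos (⟨hi1, hiR, hc1, hcC⟩ : _ ∧ _ ∧ _ ∧ _), add_zero, ← Nat.cast_pow, ← Nat.cast_mul]

-- edge v i c -- x i c
lemma ev_vx (hX : 2 ≤ X) {i c : ℕ} (hi1 : 1 ≤ i) (hiR : i ≤ R) (hc1 : 1 ≤ c) (hcC : c ≤ C) :
    wgridW R C X M (GV.v i c) (GV.x i c) = ((X^2 + M i c : ℕ) : ℕ∞) := by
  rw [wg_min_top (dwt_top M hX (by simp [dirW]))]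
  simp only [dirWt, dirW, eq_self_iff_true, true_and, if_true, and_self]
  rw [if_pos (⟨hi1, hiR, hc1, hcC⟩ : _ ∧ _ ∧ _ ∧ _), mul_one,
    ← Nat.cast_pow, ← Nat.cast_add]

-- edge x i c -- w i c
lemma ev_xw (hX : 2 ≤ X) {i c : ℕ} (hi1 : 1 ≤ i) (hiR : i ≤ R) (hc1 : 1 ≤ c) (hcC : c ≤ C) :
    wgridW R C X M (GV.x i c) (GV.w i c) = ((X^2 : ℕ) : ℕ∞) := by
  rw [wg_min_top (dwt_top M hX (by simp [dirW]))]
  simp only [dirWt, dirW, eq_self_iff_true, true_and, if_true, and_self]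
  rw [if_pos (⟨hi1, hiR, hc1, hcC⟩ : _ ∧ _ ∧ _ ∧ _), add_zero, mul_one, ← Nat.cast_pow]

-- edge u i c -- w i c
lemma ev_uw (hX : 2 ≤ X) {i c : ℕ} (hi1 : 1 ≤ i) (hiR : i ≤ R) (hc1 : 1 ≤ c) (hcC : c ≤ C) :
    wgridW R C X M (GV.u i c) (GV.w i c) = ((X^2*2 : ℕ) : ℕ∞) := by
  rw [wg_min_top (dwt_top M hX (by simp [dirW]))]
  simp only [dirWt, dirW, eq_self_iff_true, true_and, if_true]
  rw [if_pos (⟨hi1, hiR, hc1, hcC⟩ : _ ∧ _ ∧ _ ∧ _), add_zero, ← Nat.cast_pow]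
  norm_cast

-- edge w i c -- u i (c+1)
lemma ev_wu (hX : 2 ≤ X) {i c : ℕ} (hi1 : 1 ≤ i) (hiR : i ≤ R) (hc1 : 1 ≤ c) (hcC : c + 1 ≤ C) :
    wgridW R C X M (GV.w i c) (GV.u i (c+1)) = ((X^2*(2*R-2) : ℕ) : ℕ∞) := by
  rw [wg_min_top (dwt_top M hX (by simp [dirW]))]
  simp only [dirWt, dirW, eq_self_iff_true, true_and, if_true]
  rw [if_pos (⟨hi1, hiR, hc1, hcC⟩ : _ ∧ _ ∧ _ ∧ _), add_zero, ← Nat.cast_pow, ← Nat.cast_mul]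

-- edge w i C -- b i
lemma ev_wb (hX : 2 ≤ X) {i : ℕ} (hi1 : 1 ≤ i) (hiR : i ≤ R) (hC1 : 1 ≤ C) :
    wgridW R C X M (GV.w i C) (GV.b i) = ((X^2*(2*R-2) : ℕ) : ℕ∞) := by
  rw [wg_min_top (dwt_top M hX (by simp [dirW]))]
  simp only [dirWt, dirW, eq_self_iff_true, true_and, if_true]
  rw [if_pos (⟨hi1, hiR, hC1⟩ : _ ∧ _ ∧ _), add_zero, ← Nat.cast_pow, ← Nat.cast_mul]

lemma htail_cost (hX : 2 ≤ X) (hk1 : 1 ≤ k) (hkR : k ≤ R) :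
    ∀ d, d + 1 ≤ C → cost (wgridW R C X M) (GV.w k (C-d) :: htail k C d)
      = ((X^2*((2*R-2) + d*(2*R)) : ℕ) : ℕ∞)
  | 0, h => by
      show wgridW R C X M (GV.w k (C-0)) (GV.b k) + cost _ [GV.b k] = _
      rw [show C - 0 = C from rfl, ev_wb hX hk1 hkR (by omega)]
      show _ + 0 = _
      rw [add_zero]
      norm_cast
      congr 1
      omega
  | d+1, h => by
      show wgridW R C X M (GV.w k (C-(d+1))) (GV.u k (C-d)) + (wgridW R C X M (GV.u k (C-d)) (GV.w k (C-d)) + cost (wgridW R C X M) (GV.w k (C-d) :: htail k C d)) = _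
      have h1 : C - (d+1) + 1 = C - d := by omega
      have e1 : wgridW R C X M (GV.w k (C-(d+1))) (GV.u k (C-d)) = ((X^2*(2*R-2) : ℕ) : ℕ∞) := by
        rw [← h1]
        exact ev_wu hX hk1 hkR (by omega) (by omega)
      rw [e1, ev_uw hX hk1 hkR (by omega) (by omega), htail_cost hX hk1 hkR d (by omega)]
      norm_cast
      have hb : X^2*(2*R) = X^2*(2*R-2) + X^2*2 := mul_sub_bridge _ _ _ (by omega)
      have e2 : X^2*((2*R-2) + (d+1)*(2*R)) = X^2*((2*R-2) + d*(2*R)) + X^2*(2*R) := by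
        rw [← Nat.mul_add]; congr 1; ring
      have e3 : X^2*((2*R-2)+d*(2*R)) = X^2*(2*R-2) + X^2*(d*(2*R)) := by
        rw [← Nat.mul_add]
      omega
  termination_by d => d

end upper


section final
variable {R C X j k : ℕ} {M : ℕ → ℕ → ℕ}

lemma vtail_head (k j C : ℕ) : ∀ t, ∃ l', vtail k j C t = GV.v (k-t) j :: l'
  | 0 => ⟨_, rfl⟩
  | t+1 => ⟨_, rfl⟩

lemma vtail_cost (hX : 2 ≤ X) (hk1 : 1 ≤ k) (hkR : k ≤ R) (hj1 : 1 ≤ j) (hjC : j ≤ C) :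
    ∀ t, t + 1 ≤ k → cost (wgridW R C X M) (vtail k j C t)
      = ((X^2*(2*R*(C-j+1) + t*(2*j)) + M k j : ℕ) : ℕ∞) := by
  intro t
  induction t with
  | zero =>
    intro ht
    have hj' : C - (C-j) = j := by omega
    have hc := htail_cost (M:=M) (C:=C) hX hk1 hkR (C-j) (by omega)
    rw [hj'] at hc
    show wgridW R C X M (GV.v k j) (GV.x k j) +
      (wgridW R C X M (GV.x k j) (GV.w k j) +
        cost (wgridW R C X M) (GV.w k j :: htail k C (C-j))) = _
    rw [hc, ev_vx hX hk1 hkR hj1 hjC, ev_xw hX hk1 hkR hj1 hjC]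
    norm_cast
    have e1 : X^2*(2*R*(C-j+1) + 0*(2*j)) = X^2*(2*R*(C-j)) + X^2*(2*R) := by
      rw [← Nat.mul_add]; congr 1; ring
    have e2 : X^2*((2*R-2) + (C-j)*(2*R)) = X^2*(2*R-2) + X^2*((C-j)*(2*R)) := by
      rw [← Nat.mul_add]
    have e3 : X^2*((C-j)*(2*R)) = X^2*(2*R*(C-j)) := by congr 1; ring
    have hb : X^2*(2*R) = X^2*(2*R-2) + X^2*2 := mul_sub_bridge _ _ _ (by omega)
    omega
  | succ t ih =>
    intro ht
    obtain ⟨l', he⟩ := vtail_head k j C t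
    have hii : k - t = (k-(t+1)) + 1 := by omega
    have hsplit : cost (wgridW R C X M) (vtail k j C (t+1)) =
        wgridW R C X M (GV.v (k-(t+1)) j) (GV.u (k-(t+1)) j) +
        (wgridW R C X M (GV.u (k-(t+1)) j) (GV.v (k-t) j) + cost (wgridW R C X M) (vtail k j C t)) := by
      conv_lhs => rw [show vtail k j C (t+1)
        = GV.v (k-(t+1)) j :: GV.u (k-(t+1)) j :: vtail k j C t from rfl, he]
      rw [cost, cost, ← he]
    rw [hsplit, ih (by omega), ev_vu hX (by omega) (by omega) hj1 hjC,
      hii, ev_uv hX (by omega) (by omega) hj1 hjC]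
    norm_cast
    have eA : X^2*(2*R*(C-j+1)+(t+1)*(2*j)) = X^2*(2*R*(C-j+1)+t*(2*j)) + X^2*(2*j) := by
      rw [← Nat.mul_add]; congr 1; ring
    have eB : X^2*(2*j) = X^2*(2*j-1) + X^2*1 := mul_sub_bridge _ _ _ (by omega)
    have eC : X^2*1 = X^2 := Nat.mul_one _
    omega

lemma htail_wlast (k C : ℕ) : ∀ d, (GV.w k (C-d) :: htail k C d).getLast? = some (GV.b k)
  | 0 => rfl
  | d+1 => by
    show (GV.w k (C-(d+1)) :: GV.u k (C-d) :: GV.w k (C-d) :: htail k C d).getLast? = _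
    rw [List.getLast?_cons_cons, List.getLast?_cons_cons]
    exact htail_wlast k C d

lemma vtail_last (k j C : ℕ) (hjC : j ≤ C) :
    ∀ t, (vtail k j C t).getLast? = some (GV.b k)
  | 0 => by
    show (GV.v k j :: GV.x k j :: GV.w k j :: htail k C (C-j)).getLast? = _
    rw [List.getLast?_cons_cons, List.getLast?_cons_cons]
    have := htail_wlast k C (C-j)
    rwa [show C - (C-j) = j from by omega] at this
  | t+1 => by
    obtain ⟨l', he⟩ := vtail_head k j C t
    show (GV.v (k-(t+1)) j :: GV.u (k-(t+1)) j :: vtail k j C t).getLast? = _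
    rw [List.getLast?_cons_cons, he, List.getLast?_cons_cons, ← he]
    exact vtail_last k j C hjC t

lemma full_cost (hX : 2 ≤ X) (hk1 : 1 ≤ k) (hkR : k ≤ R) (hj1 : 1 ≤ j) (hjC : j ≤ C) :
    cost (wgridW R C X M) (GV.a j :: vtail k j C (k-1))
      = ((X^2*(2*R*(C-j+1) + 2*j*k - 1) + M k j : ℕ) : ℕ∞) := by
  obtain ⟨k0, rfl⟩ : ∃ k0, k = k0 + 1 := ⟨k-1, by omega⟩
  obtain ⟨l', he⟩ := vtail_head (k0+1) j C (k0+1-1)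
  rw [show k0+1-(k0+1-1) = 1 from by omega] at he
  have hsplit : cost (wgridW R C X M) (GV.a j :: vtail (k0+1) j C (k0+1-1)) =
      wgridW R C X M (GV.a j) (GV.v 1 j) + cost (wgridW R C X M) (vtail (k0+1) j C (k0+1-1)) := by
    conv_lhs => rw [he]
    rw [cost, ← he]
  rw [hsplit, vtail_cost hX hk1 hkR hj1 hjC (k0+1-1) (by omega), ev_av hX hj1 hjC]
  norm_cast
  rw [show k0+1-1 = k0 from rfl]
  have hjk : 2*j*(k0+1) = k0*(2*j) + 2*j := by ring
  have hjk1 : 1 ≤ 2*j*(k0+1) := by nlinarith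
  have f1 : X^2*(2*R*(C-j+1)+2*j*(k0+1)-1) + X^2*1
      = X^2*(2*R*(C-j+1)+k0*(2*j)) + X^2*(2*j) := by
    rw [← Nat.mul_add, ← Nat.mul_add]; congr 1; omega
  have f2 : X^2*(2*j) = X^2*(2*j-1) + X^2*1 := mul_sub_bridge _ _ _ (by omega)
  omega

lemma phi_bk (R C X j k m : ℕ) (hj1 : 1 ≤ j) (hjC : j ≤ C) (hk1 : 1 ≤ k) (hkR : k ≤ R) :
    phi R C X j k m (GV.b k) = X^2 * (2*R*(C-j+1) + 2*j*k - 1) + m := by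
  simp only [phi, phiW, if_neg (show ¬ C < j by omega), eq_self_iff_true, if_true]
  have hjk1 : 1 ≤ 2*j*k := by nlinarith
  have e : 2*R*(C-j+1) = 2*R*(C-j) + 2*R := by ring
  have h1 : X^2 * (2*R*(C-j+1) + 2*j*k - 1) + X^2*1
      = X^2*(2*j*k + 2*R*(C-j)) + X^2*(2*R) := by
    rw [← Nat.mul_add, ← Nat.mul_add]; congr 1; omega
  have h2 : X^2*(2*j*k + 2*R*(C-j) + 1) = X^2*(2*j*k + 2*R*(C-j)) + X^2*1 := by
    rw [← Nat.mul_add]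
  have h3 : X^2*(2*R) = X^2*(2*R-2) + X^2*2 := mul_sub_bridge _ _ _ (by omega)
  have h4 : (2*R-2)*X^2 = X^2*(2*R-2) := Nat.mul_comm _ _
  omega


/-- Corollary 2.2.  In the weighted grid embedding `G_M` of an `R × C`
matrix `M` with integer entries in `{0, …, X}` (`X ≥ 2`), for all `1 ≤ k ≤ R` and
`1 ≤ j ≤ C`, the distance between `a j` and `b k` is
`X²·(2R·(C−j+1) + 2jk − 1) + M k j`. -/
theorem wgrid_dist_a_b (R C X : ℕ) (hX : 2 ≤ X) (M : ℕ → ℕ → ℕ)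
    (hM : ∀ i j, 1 ≤ i → i ≤ R → 1 ≤ j → j ≤ C → M i j ≤ X)
    (k j : ℕ) (hk1 : 1 ≤ k) (hkR : k ≤ R) (hj1 : 1 ≤ j) (hjC : j ≤ C) :
    gdist (wgridW R C X M) (GV.a j) (GV.b k) =
      ((X ^ 2 * (2 * R * (C - j + 1) + 2 * j * k - 1) + M k j : ℕ) : ℕ∞) := by
  have hm : M k j ≤ X^2 := le_trans (hM k j hk1 hkR hj1 hjC) (by nlinarith)
  have hfeas : ∀ p q, ((phi R C X j k (M k j) q : ℕ) : ℕ∞) ≤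
      (phi R C X j k (M k j) p : ℕ) + wgridW R C X M p q := by
    intro p q
    have h1 := feas R C X j k (M k j) M hX hm le_rfl hj1 p q
    have h2 := feas R C X j k (M k j) M hX hm le_rfl hj1 q p
    rw [show wgridW R C X M p q = min (dirWt R C X M p q) (dirWt R C X M q p) from rfl,
        ← min_add_add_left]
    exact le_min h1.1 h2.2
  apply le_antisymm
  · refine le_trans (gdist_le _ _ _ (GV.a j :: vtail k j C (k-1)) rfl ?_) ?_
    · show (GV.a j :: vtail k j C (k-1)).getLast? = some (GV.b k)
      obtain ⟨l', he⟩ := vtail_head k j C (k-1)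
      rw [he, List.getLast?_cons_cons, ← he]
      exact vtail_last k j C hjC (k-1)
    · exact le_of_eq (full_cost hX hk1 hkR hj1 hjC)
  · apply le_gdist
    intro l h1 h2
    have hcb := cost_lb (wgridW R C X M) (fun p => ((phi R C X j k (M k j) p : ℕ) : ℕ∞))
      hfeas l _ _ h1 h2
    rw [show phi R C X j k (M k j) (GV.a j) = 0 from by simp [phi],
      Nat.cast_zero, zero_add, phi_bk R C X j k (M k j) hj1 hjC hk1 hkR] at hcb
    exact hcb
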